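/- Let d ≥ 1 and M ≥ 0 be fixed natural numbers and, for N ≥ M, set p_N := C(d+N−M−1, N−M) / (C(d+N−1, N) · C(d+M−1, M)) as a real number, where C(·,·) is the binomial coefficient. Then the sequence (p_N) converges as N → ∞ to 1 / C(d+M−1, M). (The maximum probability d₊^{(N−M)}/(d₊^{(N)}d₊^{(M)}) of teleporting M copies of a pure state from N input copies in the future to the past converges, as the number of input copies N tends to infinity, to 1/d₊^{(M)}; in particular for M = 1 the probability N/(d(d+N−1)) converges to the classical value 1/d.) -/

import Mathlib

open Matrix
open scoped Kronecker ComplexOrder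

private lemma asc_prod (n : ℕ) : ∀ m : ℕ, n.ascFactorial m = ∏ i ∈ Finset.range m, (n + i)
  | 0 => by simp [Nat.ascFactorial_zero]
  | m + 1 => by
      rw [Nat.ascFactorial_succ, Finset.prod_range_succ, asc_prod n m, mul_comm]

private lemma choose_cast_eq (d k : ℕ) (hd : 1 ≤ d) :
    (Nat.choose (d + k - 1) k : ℝ) =
      (∏ i ∈ Finset.range (d - 1), ((k : ℝ) + 1 + i)) / (Nat.factorial (d - 1) : ℝ) := by
  have hsymm : Nat.choose (d + k - 1) k = Nat.choose (d + k - 1) (d - 1) := by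
    have h1 : k ≤ d + k - 1 := by omega
    have h2 : d + k - 1 - k = d - 1 := by omega
    rw [← h2, Nat.choose_symm h1]
  have hasc : (k + 1).ascFactorial (d - 1) = Nat.factorial (d - 1) * Nat.choose (d + k - 1) (d - 1) := by
    have := Nat.ascFactorial_eq_factorial_mul_choose' (k + 1) (d - 1)
    have h3 : k + 1 + (d - 1) - 1 = d + k - 1 := by omega
    rwa [h3] at this
  have hprod : ((k + 1).ascFactorial (d - 1) : ℝ) =
      ∏ i ∈ Finset.range (d - 1), ((k : ℝ) + 1 + i) := by
    rw [asc_prod]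
    push_cast
    ring_nf
  have hfac : (Nat.factorial (d - 1) : ℝ) ≠ 0 := by
    exact_mod_cast (Nat.factorial_pos (d - 1)).ne'
  rw [hsymm, eq_div_iff hfac, ← hprod]
  exact_mod_cast (Nat.mul_comm _ _).trans hasc.symm

theorem trace_channel_prob_tendsto (d M : ℕ) (hd : 1 ≤ d) :
    Filter.Tendsto
      (fun N : ℕ =>
        (Nat.choose (d + (N - M) - 1) (N - M) : ℝ) /
          ((Nat.choose (d + N - 1) N : ℝ) * (Nat.choose (d + M - 1) M : ℝ)))
      Filter.atTop (nhds (1 / (Nat.choose (d + M - 1) M : ℝ))) := by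
  have key : Filter.Tendsto
      (fun N : ℕ =>
        (Nat.choose (d + (N - M) - 1) (N - M) : ℝ) / (Nat.choose (d + N - 1) N : ℝ))
      Filter.atTop (nhds 1) := by
    -- the limit of the product form
    have hP : Filter.Tendsto
        (fun N : ℕ => ∏ i ∈ Finset.range (d - 1),
          (((N : ℝ) - M) + 1 + i) / ((N : ℝ) + 1 + i))
        Filter.atTop (nhds 1) := by
      have : (1 : ℝ) = ∏ i ∈ Finset.range (d - 1), (1 : ℝ) := by simp
      rw [this]
      apply tendsto_finset_prod
      intro i _
      -- each factor tends to 1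
      have hdenpos : ∀ N : ℕ, (0 : ℝ) < (N : ℝ) + 1 + i := fun N => by positivity
      have h0 : Filter.Tendsto (fun N : ℕ => (M : ℝ) / ((N : ℝ) + 1 + i))
          Filter.atTop (nhds 0) :=
        Filter.Tendsto.div_atTop tendsto_const_nhds
          (Filter.tendsto_atTop_add_const_right _ _
            (Filter.tendsto_atTop_add_const_right _ _ tendsto_natCast_atTop_atTop))
      have h1 : Filter.Tendsto (fun N : ℕ => 1 - (M : ℝ) / ((N : ℝ) + 1 + i))
          Filter.atTop (nhds 1) := by
        simpa using tendsto_const_nhds.sub h0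
      apply h1.congr
      intro N
      simp only [Finset.prod_const_one]
      have hne : (N : ℝ) + 1 + i ≠ 0 := (hdenpos N).ne'
      field_simp
      ring
    apply hP.congr'
    filter_upwards [Filter.eventually_ge_atTop M] with N hMN
    have hcastsub : ((N - M : ℕ) : ℝ) = (N : ℝ) - M := by
      exact Nat.cast_sub hMN
    rw [choose_cast_eq d (N - M) hd, choose_cast_eq d N hd]
    have hfac : (Nat.factorial (d - 1) : ℝ) ≠ 0 := by
      exact_mod_cast (Nat.factorial_pos (d - 1)).ne'
    have hden : ∀ i ∈ Finset.range (d - 1), ((N : ℝ) + 1 + i) ≠ 0 := by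
      intro i _; positivity
    rw [hcastsub, div_div_div_cancel_right₀ hfac, ← Finset.prod_div_distrib]
  have hc : (0 : ℝ) < (Nat.choose (d + M - 1) M : ℝ) := by
    exact_mod_cast Nat.choose_pos (by omega : M ≤ d + M - 1)
  have h2 := key.div_const (Nat.choose (d + M - 1) M : ℝ)
  have heq : (fun N : ℕ =>
      (Nat.choose (d + (N - M) - 1) (N - M) : ℝ) /
        ((Nat.choose (d + N - 1) N : ℝ) * (Nat.choose (d + M - 1) M : ℝ))) =
      fun N : ℕ =>
        (Nat.choose (d + (N - M) - 1) (N - M) : ℝ) / (Nat.choose (d + N - 1) N : ℝ) /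
          (Nat.choose (d + M - 1) M : ℝ) := funext fun N => (div_div _ _ _).symm
  rw [heq]
  exact h2
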